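/- For 1<q<p, fix f,A,F>0 with f^q < A < f^{(p-q)/(p-1)} F^{(q-1)/(p-1)}. The function g(κ) = κ^{q-1} H_q(ω_p(f^p/(κ^{p-1}F))) is strictly increasing on [(f^p/F)^{1/(p-1)}, 1], with derivative g'(κ) = ((q-1)(p-q)/p) κ^{q-2} ω_p(f^p/(κ^{p-1}F))^q > 0. -/

import Mathlib

open Real Set

noncomputable def Hfun (p : ℝ) : ℝ → ℝ := fun z => p * z ^ (p - 1) - (p - 1) * z ^ p

lemma Hfun_hasDerivAt {p : ℝ} (w : ℝ) (hw : 0 < w) :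
    HasDerivAt (Hfun p) (p * (p - 1) * w ^ (p - 2) * (1 - w)) w := by
  have h1 : HasDerivAt (fun z : ℝ => z ^ (p - 1)) ((p - 1) * w ^ (p - 1 - 1)) w :=
    Real.hasDerivAt_rpow_const (Or.inl hw.ne')
  have h2 : HasDerivAt (fun z : ℝ => z ^ p) (p * w ^ (p - 1)) w :=
    Real.hasDerivAt_rpow_const (Or.inl hw.ne')
  have h := (h1.const_mul p).sub (h2.const_mul (p - 1))
  refine h.congr_deriv ?_
  have e1 : w ^ (p - 1) = w ^ (p - 2) * w := by
    rw [show p - 1 = (p - 2) + 1 by ring, Real.rpow_add_one hw.ne']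
  rw [show p - 1 - 1 = p - 2 by ring, e1]
  ring

lemma Hfun_one {p : ℝ} : Hfun p 1 = 1 := by simp [Hfun]

lemma Hfun_top {p : ℝ} (hp : 1 < p) : Hfun p (p / (p - 1)) = 0 := by
  have hp1 : (0:ℝ) < p - 1 := by linarith
  have hl0 : (0:ℝ) < p / (p - 1) := by positivity
  have e : (p / (p - 1)) ^ p = (p / (p - 1)) ^ (p - 1) * (p / (p - 1)) := by
    have h := Real.rpow_add_one hl0.ne' (p - 1)
    rwa [sub_add_cancel] at h
  simp only [Hfun, e]
  have : (p - 1) * ((p / (p - 1)) ^ (p - 1) * (p / (p - 1)))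
      = p * (p / (p - 1)) ^ (p - 1) := by
    field_simp
  rw [this]; ring

lemma Hfun_strictAntiOn {p : ℝ} (hp : 1 < p) :
    StrictAntiOn (Hfun p) (Icc 1 (p / (p - 1))) := by
  have hcont : ContinuousOn (Hfun p) (Icc 1 (p / (p - 1))) := by
    apply ContinuousOn.sub
    · exact continuousOn_const.mul (continuousOn_id.rpow_const
        fun x hx => Or.inl (show (0:ℝ) < x by linarith [hx.1]).ne')
    · exact continuousOn_const.mul (continuousOn_id.rpow_const
        fun x hx => Or.inl (show (0:ℝ) < x by linarith [hx.1]).ne')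
  apply strictAntiOn_of_deriv_neg (convex_Icc _ _) hcont
  intro x hx
  rw [interior_Icc] at hx
  have hx1 : 1 < x := hx.1
  rw [(Hfun_hasDerivAt x (by linarith)).deriv]
  have hpow : 0 < x ^ (p - 2) := Real.rpow_pos_of_pos (by linarith) _
  have h1 : 0 < p * (p - 1) * x ^ (p - 2) := mul_pos (mul_pos (by linarith) (by linarith)) hpow
  nlinarith

section Omega

variable {p : ℝ} {ωp : ℝ → ℝ}

lemma omega_mem (hωp : ∀ s ∈ Icc (0 : ℝ) 1, ωp s ∈ Icc 1 (p / (p - 1)) ∧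
      p * ωp s ^ (p - 1) - (p - 1) * ωp s ^ p = s) :
    ∀ s ∈ Icc (0 : ℝ) 1, ωp s ∈ Icc 1 (p / (p - 1)) := fun s hs => (hωp s hs).1

lemma omega_eq (hωp : ∀ s ∈ Icc (0 : ℝ) 1, ωp s ∈ Icc 1 (p / (p - 1)) ∧
      p * ωp s ^ (p - 1) - (p - 1) * ωp s ^ p = s) :
    ∀ s ∈ Icc (0 : ℝ) 1, Hfun p (ωp s) = s := fun s hs => (hωp s hs).2

lemma omega_strictAntiOn (hp : 1 < p)
    (hωp : ∀ s ∈ Icc (0 : ℝ) 1, ωp s ∈ Icc 1 (p / (p - 1)) ∧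
      p * ωp s ^ (p - 1) - (p - 1) * ωp s ^ p = s) :
    StrictAntiOn ωp (Icc 0 1) := by
  intro s hs t ht hst
  rcases lt_trichotomy (ωp t) (ωp s) with h | h | h
  · exact h
  · exfalso
    have h1 := omega_eq hωp s hs
    have h2 := omega_eq hωp t ht
    rw [h] at h2
    rw [h2] at h1
    linarith
  · exfalso
    have h2 := Hfun_strictAntiOn hp (omega_mem hωp s hs) (omega_mem hωp t ht) h
    rw [omega_eq hωp s hs, omega_eq hωp t ht] at h2
    linarith

lemma omega_one (hp : 1 < p)
    (hωp : ∀ s ∈ Icc (0 : ℝ) 1, ωp s ∈ Icc 1 (p / (p - 1)) ∧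
      p * ωp s ^ (p - 1) - (p - 1) * ωp s ^ p = s) :
    ωp 1 = 1 := by
  have h1 : (1:ℝ) ∈ Icc (0:ℝ) 1 := by simp
  apply (Hfun_strictAntiOn hp).injOn (omega_mem hωp 1 h1)
    (show (1:ℝ) ∈ Icc 1 (p/(p-1)) from ⟨le_refl _, by
      rw [le_div_iff₀ (by linarith)]; linarith⟩)
  rw [omega_eq hωp 1 h1, Hfun_one]

lemma omega_zero (hp : 1 < p)
    (hωp : ∀ s ∈ Icc (0 : ℝ) 1, ωp s ∈ Icc 1 (p / (p - 1)) ∧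
      p * ωp s ^ (p - 1) - (p - 1) * ωp s ^ p = s) :
    ωp 0 = p / (p - 1) := by
  have h0 : (0:ℝ) ∈ Icc (0:ℝ) 1 := by simp
  apply (Hfun_strictAntiOn hp).injOn (omega_mem hωp 0 h0)
    (show p/(p-1) ∈ Icc 1 (p/(p-1)) from ⟨by
      rw [le_div_iff₀ (by linarith)]; linarith, le_refl _⟩)
  rw [omega_eq hωp 0 h0, Hfun_top hp]

lemma omega_surj (hp : 1 < p)
    (hωp : ∀ s ∈ Icc (0 : ℝ) 1, ωp s ∈ Icc 1 (p / (p - 1)) ∧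
      p * ωp s ^ (p - 1) - (p - 1) * ωp s ^ p = s) :
    ∀ z ∈ Icc (1:ℝ) (p / (p - 1)), ∃ s ∈ Icc (0:ℝ) 1, ωp s = z := by
  intro z hz
  have h1mem : (1:ℝ) ∈ Icc (1:ℝ) (p/(p-1)) := ⟨le_refl _, by
    rw [le_div_iff₀ (by linarith)]; linarith⟩
  have hlmem : p/(p-1) ∈ Icc (1:ℝ) (p/(p-1)) := ⟨by
    rw [le_div_iff₀ (by linarith)]; linarith, le_refl _⟩
  have hs1 : Hfun p z ≤ 1 := by
    rcases eq_or_lt_of_le hz.1 with h | h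
    · rw [← h, Hfun_one]
    · rw [← Hfun_one (p := p)]
      exact le_of_lt (Hfun_strictAntiOn hp h1mem hz h)
  have hs0 : 0 ≤ Hfun p z := by
    rcases eq_or_lt_of_le hz.2 with h | h
    · rw [h, Hfun_top hp]
    · rw [← Hfun_top hp]
      exact le_of_lt (Hfun_strictAntiOn hp hz hlmem h)
  refine ⟨Hfun p z, ⟨hs0, hs1⟩, ?_⟩
  apply (Hfun_strictAntiOn hp).injOn (omega_mem hωp _ ⟨hs0, hs1⟩) hz
  rw [omega_eq hωp _ ⟨hs0, hs1⟩]

lemma omega_continuousOn (hp : 1 < p)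
    (hωp : ∀ s ∈ Icc (0 : ℝ) 1, ωp s ∈ Icc 1 (p / (p - 1)) ∧
      p * ωp s ^ (p - 1) - (p - 1) * ωp s ^ p = s) :
    ContinuousOn ωp (Icc 0 1) := by
  have hanti := omega_strictAntiOn hp hωp
  have hmono : StrictMonoOn (fun s => -ωp s) (Icc (0:ℝ) 1) :=
    fun x hx y hy hxy => neg_lt_neg (hanti hx hy hxy)
  intro a ha
  have hleft : ContinuousWithinAt ωp (Icc 0 1 ∩ Iic a) a := by
    rcases eq_or_lt_of_le ha.1 with h0 | h0
    · exact continuousWithinAt_singleton.mono (by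
        intro x hx
        have : x = a := le_antisymm hx.2 (by rw [← h0]; exact hx.1.1)
        simp [this])
    · have hnbhd : Icc (0:ℝ) 1 ∈ nhdsWithin a (Iic a) := by
        rw [mem_nhdsWithin]
        exact ⟨Ioo 0 2, isOpen_Ioo, ⟨h0, by linarith [ha.2]⟩,
          fun x hx => ⟨le_of_lt hx.1.1, le_trans hx.2 ha.2⟩⟩
      have hbet : ∀ b < (fun s => -ωp s) a, ∃ c ∈ Icc (0:ℝ) 1,
          (fun s => -ωp s) c ∈ Ico b ((fun s => -ωp s) a) := by
        intro b hb
        simp only at hb ⊢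
        have hwa_lt : ωp a < p / (p - 1) := by
          rw [← omega_zero hp hωp]
          exact hanti (by simp) ha h0
        have hwa1 : 1 ≤ ωp a := (omega_mem hωp a ha).1
        set z := min (-b) (p / (p - 1)) with hz
        have hz1 : ωp a < z := lt_min (by linarith) hwa_lt
        obtain ⟨c, hc, hcz⟩ := omega_surj hp hωp z ⟨by linarith, min_le_right _ _⟩
        refine ⟨c, hc, ?_⟩
        rw [hcz]
        exact ⟨by linarith [min_le_left (-b) (p/(p-1))], by linarith⟩
      have h := hmono.continuousWithinAt_left_of_exists_between hnbhd hbet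
      have h2 := h.neg
      simp only [Pi.neg_def, neg_neg] at h2
      exact h2.mono inter_subset_right
  have hright : ContinuousWithinAt ωp (Icc 0 1 ∩ Ici a) a := by
    rcases eq_or_lt_of_le ha.2 with h1 | h1
    · exact continuousWithinAt_singleton.mono (by
        intro x hx
        have : x = a := le_antisymm (h1 ▸ hx.1.2) hx.2
        simp [this])
    · have hnbhd : Icc (0:ℝ) 1 ∈ nhdsWithin a (Ici a) := by
        rw [mem_nhdsWithin]
        exact ⟨Ioo (-1) 1, isOpen_Ioo, ⟨by linarith [ha.1], h1⟩,
          fun x hx => ⟨le_trans ha.1 hx.2, le_of_lt hx.1.2⟩⟩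
      have hbet : ∀ b > (fun s => -ωp s) a, ∃ c ∈ Icc (0:ℝ) 1,
          (fun s => -ωp s) c ∈ Ioc ((fun s => -ωp s) a) b := by
        intro b hb
        simp only at hb ⊢
        have hwa1 : 1 < ωp a := by
          rw [← omega_one hp hωp]
          exact hanti ha (by simp) h1
        have hwal : ωp a ≤ p/(p-1) := (omega_mem hωp a ha).2
        set z := max (-b) 1 with hz
        have hz1 : z < ωp a := max_lt (by linarith) hwa1
        obtain ⟨c, hc, hcz⟩ := omega_surj hp hωp z
          ⟨le_max_right _ _, by linarith⟩
        refine ⟨c, hc, ?_⟩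
        rw [hcz]
        exact ⟨by linarith, by linarith [le_max_left (-b) 1]⟩
      have h := hmono.continuousWithinAt_right_of_exists_between hnbhd hbet
      have h2 := h.neg
      simp only [Pi.neg_def, neg_neg] at h2
      exact h2.mono inter_subset_right
  have := hleft.union hright
  rwa [← inter_union_distrib_left, Iic_union_Ici, inter_univ] at this

lemma omega_hasDerivAt (hp : 1 < p)
    (hωp : ∀ s ∈ Icc (0 : ℝ) 1, ωp s ∈ Icc 1 (p / (p - 1)) ∧
      p * ωp s ^ (p - 1) - (p - 1) * ωp s ^ p = s)
    {s : ℝ} (hs : s ∈ Ioo (0:ℝ) 1) :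
    HasDerivAt ωp (p * (p - 1) * (ωp s) ^ (p - 2) * (1 - ωp s))⁻¹ s := by
  have hsI : s ∈ Icc (0:ℝ) 1 := Ioo_subset_Icc_self hs
  have hw1 : 1 < ωp s := by
    rw [← omega_one hp hωp]
    exact omega_strictAntiOn hp hωp hsI (by simp) hs.2
  have hcont : ContinuousAt ωp s :=
    (omega_continuousOn hp hωp).continuousAt (Icc_mem_nhds hs.1 hs.2)
  have hfg : ∀ᶠ y in nhds s, Hfun p (ωp y) = y := by
    filter_upwards [Ioo_mem_nhds hs.1 hs.2] with y hy
    exact omega_eq hωp y (Ioo_subset_Icc_self hy)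
  have hD : p * (p - 1) * (ωp s) ^ (p - 2) * (1 - ωp s) ≠ 0 := by
    have hpow : 0 < (ωp s) ^ (p - 2) := Real.rpow_pos_of_pos (by linarith) _
    have : p * (p - 1) * (ωp s) ^ (p - 2) * (1 - ωp s) < 0 := by
      apply mul_neg_of_pos_of_neg
      · exact mul_pos (mul_pos (by linarith) (by linarith)) hpow
      · linarith
    exact this.ne
  exact HasDerivAt.of_local_left_inverse hcont
    (Hfun_hasDerivAt (ωp s) (by linarith)) hD hfg

end Omega

theorem g_strictMono_deriv (p q : ℝ) (hq : 1 < q) (hpq : q < p)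
    (ωp : ℝ → ℝ)
    (hωp : ∀ s ∈ Icc (0 : ℝ) 1, ωp s ∈ Icc 1 (p / (p - 1)) ∧
      p * ωp s ^ (p - 1) - (p - 1) * ωp s ^ p = s)
    (f A F : ℝ) (hf : 0 < f) (hA : 0 < A) (hF : 0 < F)
    (h1 : f ^ q < A) (h2 : A < f ^ ((p - q) / (p - 1)) * F ^ ((q - 1) / (p - 1))) :
    StrictMonoOn
      (fun κ : ℝ => κ ^ (q - 1) *
        (q * ωp (f ^ p / (κ ^ (p - 1) * F)) ^ (q - 1)
          - (q - 1) * ωp (f ^ p / (κ ^ (p - 1) * F)) ^ q))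
      (Icc ((f ^ p / F) ^ (1 / (p - 1))) 1) ∧
    ∀ κ ∈ Ioo ((f ^ p / F) ^ (1 / (p - 1))) 1,
      HasDerivAt
        (fun κ : ℝ => κ ^ (q - 1) *
          (q * ωp (f ^ p / (κ ^ (p - 1) * F)) ^ (q - 1)
            - (q - 1) * ωp (f ^ p / (κ ^ (p - 1) * F)) ^ q))
        (((q - 1) * (p - q) / p) * κ ^ (q - 2) * ωp (f ^ p / (κ ^ (p - 1) * F)) ^ q) κ ∧
      0 < ((q - 1) * (p - q) / p) * κ ^ (q - 2) * ωp (f ^ p / (κ ^ (p - 1) * F)) ^ q := by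
  have hp1 : 1 < p := hq.trans hpq
  have hq10 : 0 < q - 1 := by linarith
  have hp10 : 0 < p - 1 := by linarith
  have hfp : 0 < f ^ p := Real.rpow_pos_of_pos hf p
  have hfpF : f ^ p < F := by
    have hlt : f ^ q < f ^ ((p - q) / (p - 1)) * F ^ ((q - 1) / (p - 1)) := h1.trans h2
    have hsplit : f ^ q = f ^ ((p - q) / (p - 1)) * f ^ (p * (q - 1) / (p - 1)) := by
      rw [← Real.rpow_add hf]
      congr 1
      field_simp
      ring
    rw [hsplit] at hlt
    have hfq : 0 < f ^ ((p - q) / (p - 1)) := Real.rpow_pos_of_pos hf _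
    have e1 : f ^ (p * (q - 1) / (p - 1)) < F ^ ((q - 1) / (p - 1)) :=
      lt_of_mul_lt_mul_left hlt hfq.le
    have e2 := Real.rpow_lt_rpow (Real.rpow_pos_of_pos hf _).le e1
      (show 0 < (p - 1) / (q - 1) by positivity)
    rw [← Real.rpow_mul hf.le, ← Real.rpow_mul hF.le,
      show p * (q - 1) / (p - 1) * ((p - 1) / (q - 1)) = p by
        field_simp,
      show (q - 1) / (p - 1) * ((p - 1) / (q - 1)) = 1 by
        field_simp, Real.rpow_one] at e2
    exact e2
  set c := f ^ p / F with hc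
  have hc0 : 0 < c := by positivity
  have hc1 : c < 1 := (div_lt_one hF).2 hfpF
  set L := c ^ (1 / (p - 1)) with hL
  have hL0 : 0 < L := Real.rpow_pos_of_pos hc0 _
  have hL1 : L < 1 := Real.rpow_lt_one hc0.le hc1 (by positivity)
  have hLpow : L ^ (p - 1) = c := by
    rw [hL, ← Real.rpow_mul hc0.le, one_div_mul_cancel hp10.ne', Real.rpow_one]
  have hfpc : f ^ p = c * F := by
    rw [hc]; field_simp
  -- membership of the inner point
  have hsmem : ∀ κ ∈ Ioo L 1, f ^ p / (κ ^ (p - 1) * F) ∈ Ioo (0 : ℝ) 1 := by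
    intro κ hκ
    have hκ0 : 0 < κ := hL0.trans hκ.1
    have hκpF : 0 < κ ^ (p - 1) * F := by positivity
    constructor
    · positivity
    · rw [div_lt_one hκpF]
      have hlt : c < κ ^ (p - 1) := by
        rw [← hLpow]
        exact Real.rpow_lt_rpow hL0.le hκ.1 hp10
      rw [hfpc]
      exact mul_lt_mul_of_pos_right hlt hF
  -- positivity of the claimed derivative
  have hpos : ∀ κ ∈ Ioo L 1,
      0 < ((q - 1) * (p - q) / p) * κ ^ (q - 2) * ωp (f ^ p / (κ ^ (p - 1) * F)) ^ q := by
    intro κ hκ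
    have hκ0 : 0 < κ := hL0.trans hκ.1
    have hw1 : 1 ≤ ωp (f ^ p / (κ ^ (p - 1) * F)) :=
      (hωp _ (Ioo_subset_Icc_self (hsmem κ hκ))).1.1
    apply mul_pos (mul_pos _ (Real.rpow_pos_of_pos hκ0 _))
      (Real.rpow_pos_of_pos (by linarith) _)
    exact div_pos (mul_pos (by linarith) (by linarith)) (by linarith)
  -- the derivative computation
  have key : ∀ κ ∈ Ioo L 1,
      HasDerivAt
        (fun κ : ℝ => κ ^ (q - 1) *
          (q * ωp (f ^ p / (κ ^ (p - 1) * F)) ^ (q - 1)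
            - (q - 1) * ωp (f ^ p / (κ ^ (p - 1) * F)) ^ q))
        (((q - 1) * (p - q) / p) * κ ^ (q - 2) * ωp (f ^ p / (κ ^ (p - 1) * F)) ^ q) κ := by
    intro κ hκ
    have hκ0 : 0 < κ := hL0.trans hκ.1
    have hκpF : 0 < κ ^ (p - 1) * F := by positivity
    have hsval := hsmem κ hκ
    set s := f ^ p / (κ ^ (p - 1) * F) with hsdef
    set w := ωp s with hwdef
    have hsI : s ∈ Icc (0 : ℝ) 1 := Ioo_subset_Icc_self hsval
    have hw1 : 1 < w := by
      rw [hwdef, ← omega_one hp1 hωp]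
      exact omega_strictAntiOn hp1 hωp hsI (by simp) hsval.2
    have hw0 : 0 < w := by linarith
    have hrel : p * w ^ (p - 1) - (p - 1) * w ^ p = s := omega_eq hωp s hsI
    have hden : HasDerivAt (fun x : ℝ => x ^ (p - 1) * F) ((p - 1) * κ ^ (p - 1 - 1) * F) κ :=
      (Real.hasDerivAt_rpow_const (Or.inl hκ0.ne')).mul_const F
    have hs' : HasDerivAt (fun x : ℝ => f ^ p / (x ^ (p - 1) * F))
        ((0 * (κ ^ (p - 1) * F) - f ^ p * ((p - 1) * κ ^ (p - 1 - 1) * F)) / (κ ^ (p - 1) * F) ^ 2)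
        κ := (hasDerivAt_const κ (f ^ p)).div hden hκpF.ne'
    have homega := omega_hasDerivAt hp1 hωp hsval
    have hW : HasDerivAt (fun x : ℝ => ωp (f ^ p / (x ^ (p - 1) * F)))
        ((p * (p - 1) * w ^ (p - 2) * (1 - w))⁻¹ *
          ((0 * (κ ^ (p - 1) * F) - f ^ p * ((p - 1) * κ ^ (p - 1 - 1) * F)) /
            (κ ^ (p - 1) * F) ^ 2)) κ := homega.comp κ hs'
    have hv1 : HasDerivAt (fun x : ℝ => ωp (f ^ p / (x ^ (p - 1) * F)) ^ (q - 1))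
        (((p * (p - 1) * w ^ (p - 2) * (1 - w))⁻¹ *
          ((0 * (κ ^ (p - 1) * F) - f ^ p * ((p - 1) * κ ^ (p - 1 - 1) * F)) /
            (κ ^ (p - 1) * F) ^ 2)) * (q - 1) * w ^ (q - 1 - 1)) κ :=
      hW.rpow_const (Or.inl hw0.ne')
    have hv2 : HasDerivAt (fun x : ℝ => ωp (f ^ p / (x ^ (p - 1) * F)) ^ q)
        (((p * (p - 1) * w ^ (p - 2) * (1 - w))⁻¹ *
          ((0 * (κ ^ (p - 1) * F) - f ^ p * ((p - 1) * κ ^ (p - 1 - 1) * F)) /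
            (κ ^ (p - 1) * F) ^ 2)) * q * w ^ (q - 1)) κ :=
      hW.rpow_const (Or.inl hw0.ne')
    have hv := (hv1.const_mul q).sub (hv2.const_mul (q - 1))
    have hu : HasDerivAt (fun x : ℝ => x ^ (q - 1)) ((q - 1) * κ ^ (q - 1 - 1)) κ :=
      Real.hasDerivAt_rpow_const (Or.inl hκ0.ne')
    have hg := hu.mul hv
    have heq :
        (q - 1) * κ ^ (q - 1 - 1) *
            (q * w ^ (q - 1) - (q - 1) * w ^ q) +
          κ ^ (q - 1) *
            (q * (((p * (p - 1) * w ^ (p - 2) * (1 - w))⁻¹ *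
                ((0 * (κ ^ (p - 1) * F) - f ^ p * ((p - 1) * κ ^ (p - 1 - 1) * F)) /
                  (κ ^ (p - 1) * F) ^ 2)) * (q - 1) * w ^ (q - 1 - 1)) -
              (q - 1) * (((p * (p - 1) * w ^ (p - 2) * (1 - w))⁻¹ *
                ((0 * (κ ^ (p - 1) * F) - f ^ p * ((p - 1) * κ ^ (p - 1 - 1) * F)) /
                  (κ ^ (p - 1) * F) ^ 2)) * q * w ^ (q - 1))) =
        ((q - 1) * (p - q) / p) * κ ^ (q - 2) * w ^ q := by
      have hκne : κ ≠ 0 := hκ0.ne'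
      have hwne : w ≠ 0 := hw0.ne'
      have h1w : 1 - w ≠ 0 := ne_of_lt (by linarith : (1:ℝ) - w < 0)
      have eκ1 : κ ^ (q - 1) = κ ^ (q - 2) * κ := by
        rw [show q - 1 = q - 2 + 1 by ring, Real.rpow_add_one hκne]
      have eκ2 : κ ^ (q - 1 - 1) = κ ^ (q - 2) := by rw [show q - 1 - 1 = q - 2 by ring]
      have ew1 : w ^ (q - 1) = w ^ (q - 2) * w := by
        rw [show q - 1 = q - 2 + 1 by ring, Real.rpow_add_one hwne]
      have ew2 : w ^ (q - 1 - 1) = w ^ (q - 2) := by rw [show q - 1 - 1 = q - 2 by ring]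
      have ew3 : w ^ q = w ^ (q - 2) * w * w := by
        have t := Real.rpow_add_one hwne (q - 1)
        rw [show q - 1 + 1 = q by ring] at t
        rw [t, ew1]
      have ep1 : w ^ (p - 1) = w ^ (p - 2) * w := by
        rw [show p - 1 = p - 2 + 1 by ring, Real.rpow_add_one hwne]
      have ep3 : w ^ p = w ^ (p - 2) * w * w := by
        have t := Real.rpow_add_one hwne (p - 1)
        rw [show p - 1 + 1 = p by ring] at t
        rw [t, ep1]
      have eκp1 : κ ^ (p - 1) = κ ^ (p - 2) * κ := by
        rw [show p - 1 = p - 2 + 1 by ring, Real.rpow_add_one hκne]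
      have eκp2 : κ ^ (p - 1 - 1) = κ ^ (p - 2) := by rw [show p - 1 - 1 = p - 2 by ring]
      have hfrel : f ^ p = (p * w ^ (p - 1) - (p - 1) * w ^ p) * (κ ^ (p - 1) * F) := by
        rw [hrel, hsdef, div_mul_cancel₀ _ hκpF.ne']
      rw [hfrel, eκ1, eκ2, ew1, ew2, ew3, ep1, ep3, eκp1, eκp2]
      have hpne : p ≠ 0 := by positivity
      have hp1ne : p - 1 ≠ 0 := hp10.ne'
      have hwp2 : w ^ (p - 2) ≠ 0 := (Real.rpow_pos_of_pos hw0 _).ne'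
      have hκp2 : κ ^ (p - 2) ≠ 0 := (Real.rpow_pos_of_pos hκ0 _).ne'
      have hFne : F ≠ 0 := hF.ne'
      field_simp
      ring
    exact hg.congr_deriv (by rw [← heq]; rfl)
  refine ⟨?_, fun κ hκ => ⟨key κ hκ, hpos κ hκ⟩⟩
  apply strictMonoOn_of_deriv_pos (convex_Icc _ _)
  · -- continuity
    have hscont : ContinuousOn (fun κ : ℝ => f ^ p / (κ ^ (p - 1) * F)) (Icc L 1) := by
      apply ContinuousOn.div continuousOn_const
      · exact (continuousOn_id.rpow_const fun x hx => Or.inl (hL0.trans_le hx.1).ne').mul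
          continuousOn_const
      · intro x hx
        have hx0 : 0 < x := hL0.trans_le hx.1
        have : 0 < x ^ (p - 1) * F := by positivity
        exact this.ne'
    have hmaps : MapsTo (fun κ : ℝ => f ^ p / (κ ^ (p - 1) * F)) (Icc L 1) (Icc 0 1) := by
      intro x hx
      have hx0 : 0 < x := hL0.trans_le hx.1
      have hxp : 0 < x ^ (p - 1) * F := by positivity
      constructor
      · positivity
      · rw [div_le_one hxp]
        have hle : c ≤ x ^ (p - 1) := by
          rw [← hLpow]
          exact Real.rpow_le_rpow hL0.le hx.1 hp10.le
        rw [hfpc]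
        exact mul_le_mul_of_nonneg_right hle hF.le
    have hWcont := (omega_continuousOn hp1 hωp).comp hscont hmaps
    apply ContinuousOn.mul
    · exact continuousOn_id.rpow_const fun x hx => Or.inr (by linarith)
    · apply ContinuousOn.sub
      · exact continuousOn_const.mul (hWcont.rpow_const fun x hx => Or.inr (by linarith))
      · exact continuousOn_const.mul (hWcont.rpow_const fun x hx => Or.inr (by linarith))
  · intro x hx
    rw [interior_Icc] at hx
    rw [(key x hx).deriv]
    exact hpos x hx
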